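/- With ρ and Γ from the 0.732 construction, for every y ∈ [1/2, 1] the inequality ∫_{1/2}^y x·ρ(x) dx + ∫_y^1 max(x/2, 1−x)·ρ(x) dx ≥ Γ·y holds. -/

import Mathlib

open MeasureTheory Set intervalIntegral

/-- congruence on the open-closed interval -/
lemma piece_eq {f g : ℝ → ℝ} {a b : ℝ} (hab : a ≤ b)
    (h : ∀ x, a < x → x ≤ b → f x = g x) :
    ∫ x in a..b, f x = ∫ x in a..b, g x := by
  apply intervalIntegral.integral_congr_ae
  filter_upwards with x hx
  rw [Set.uIoc_of_le hab] at hx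
  exact h x hx.1 hx.2

lemma log_int (a b : ℝ) (ha : 1/2 < a) (hab : a ≤ b) :
    ∫ x in a..b, (2*x - 1)⁻¹ =
      1/2 * Real.log (2*b - 1) - 1/2 * Real.log (2*a - 1) := by
  have hder : ∀ x ∈ Set.uIcc a b,
      HasDerivAt (fun x : ℝ => 1/2 * Real.log (2*x - 1)) ((2*x - 1)⁻¹) x := by
    intro x hx
    rw [Set.uIcc_of_le hab] at hx
    have hx0 : 2*x - 1 ≠ 0 := by have := hx.1; intro h; nlinarith
    have h1 : HasDerivAt (fun x : ℝ => 2*x - 1) 2 x := by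
      simpa using ((hasDerivAt_id x).const_mul 2).sub_const 1
    have h2 := ((Real.hasDerivAt_log hx0).comp x h1).const_mul (1/2)
    rw [show (2*x - 1)⁻¹ = 1/2 * ((2*x - 1)⁻¹ * 2) by ring]
    exact h2
  rw [intervalIntegral.integral_eq_sub_of_hasDerivAt hder]
  apply ContinuousOn.intervalIntegrable
  apply ContinuousOn.inv₀ (by fun_prop)
  intro x hx
  rw [Set.uIcc_of_le hab] at hx
  have := hx.1; intro h; nlinarith

lemma int_x_div (G a b : ℝ) (ha : 1/2 < a) (hab : a ≤ b) :
    ∫ x in a..b, x * (G/(2*x - 1)) =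
      G*(b - a)/2 + G/2 * (1/2 * Real.log (2*b - 1) - 1/2 * Real.log (2*a - 1)) := by
  have key : ∫ x in a..b, x * (G/(2*x - 1))
      = ∫ x in a..b, (G/2 + (G/2) * (2*x - 1)⁻¹) := by
    apply piece_eq hab
    intro x hx1 hx2
    have hx0 : 2*x - 1 ≠ 0 := by intro h; nlinarith
    linear_combination (G/2) * mul_inv_cancel₀ hx0
  have hii : IntervalIntegrable (fun x : ℝ => (G/2) * (2*x - 1)⁻¹) volume a b := by
    apply ContinuousOn.intervalIntegrable
    apply ContinuousOn.mul continuousOn_const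
    apply ContinuousOn.inv₀ (by fun_prop)
    intro x hx
    rw [Set.uIcc_of_le hab] at hx
    have := hx.1; intro h; nlinarith
  rw [key, intervalIntegral.integral_add (intervalIntegrable_const) hii,
    intervalIntegral.integral_const, intervalIntegral.integral_const_mul, log_int a b ha hab]
  simp [smul_eq_mul]
  ring

lemma int_one_sub_div (G a b : ℝ) (ha : 1/2 < a) (hab : a ≤ b) :
    ∫ x in a..b, (1 - x) * (G/(2*x - 1)) =
      -(G*(b - a)/2) + G/2 * (1/2 * Real.log (2*b - 1) - 1/2 * Real.log (2*a - 1)) := by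
  have key : ∫ x in a..b, (1 - x) * (G/(2*x - 1))
      = ∫ x in a..b, (-(G/2) + (G/2) * (2*x - 1)⁻¹) := by
    apply piece_eq hab
    intro x hx1 hx2
    have hx0 : 2*x - 1 ≠ 0 := by intro h; nlinarith
    linear_combination (-(G/2)) * mul_inv_cancel₀ hx0
  have hii : IntervalIntegrable (fun x : ℝ => (G/2) * (2*x - 1)⁻¹) volume a b := by
    apply ContinuousOn.intervalIntegrable
    apply ContinuousOn.mul continuousOn_const
    apply ContinuousOn.inv₀ (by fun_prop)
    intro x hx
    rw [Set.uIcc_of_le hab] at hx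
    have := hx.1; intro h; nlinarith
  rw [key, intervalIntegral.integral_add (intervalIntegrable_const) hii,
    intervalIntegral.integral_const, intervalIntegral.integral_const_mul, log_int a b ha hab]
  simp [smul_eq_mul]
  ring

set_option maxHeartbeats 1000000 in
/-- with `ρ` and `Γ` from the 0.732 construction
(`ρ(x) = Γ/(2x−1)` for `c < x ≤ 2/3`, `ρ(x) = 2Γ/x` for `2/3 < x ≤ 1`, `0` otherwise,
where `c` solves `1/(6c−3) = e^{2c}` and `Γ = −2/ln((16/27)(2c−1))`), for every
`y ∈ [1/2, 1]`:
`∫_{1/2}^y x·ρ(x) dx + ∫_y^1 max(x/2, 1−x)·ρ(x) dx ≥ Γ·y`. -/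
theorem improved_density_guarantee
    (c : ℝ) (hc1 : 1 / 2 < c) (hc2 : c < 2 / 3)
    (hc : 1 / (6 * c - 3) = Real.exp (2 * c))
    (y : ℝ) (hy1 : 1 / 2 ≤ y) (hy2 : y ≤ 1) :
    (∫ x in (1 / 2 : ℝ)..y, x *
        (if x ≤ c then 0 else if x ≤ 2 / 3 then
          (-2 / Real.log ((16 / 27) * (2 * c - 1))) / (2 * x - 1)
        else 2 * (-2 / Real.log ((16 / 27) * (2 * c - 1))) / x))
      + (∫ x in y..1, max (x / 2) (1 - x) *
        (if x ≤ c then 0 else if x ≤ 2 / 3 then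
          (-2 / Real.log ((16 / 27) * (2 * c - 1))) / (2 * x - 1)
        else 2 * (-2 / Real.log ((16 / 27) * (2 * c - 1))) / x))
      ≥ (-2 / Real.log ((16 / 27) * (2 * c - 1))) * y := by
  set G : ℝ := -2 / Real.log ((16 / 27) * (2 * c - 1)) with hGdef
  set ρ : ℝ → ℝ := fun x => if x ≤ c then 0 else if x ≤ 2/3 then G/(2*x - 1) else 2*G/x with hρ
  have hrw : ∀ x : ℝ, (if x ≤ c then (0:ℝ) else if x ≤ 2 / 3 then G / (2 * x - 1)
      else 2 * G / x) = ρ x := fun x => rfl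
  simp only [hrw]
  -- basic facts
  have hc0 : (0:ℝ) < 2*c - 1 := by linarith
  have hlog2c : Real.log (2*c - 1) = -Real.log 3 - 2*c := by
    have h63 : (6*c - 3 : ℝ) = (Real.exp (2*c))⁻¹ := by
      rw [← hc]; rw [one_div, inv_inv]
    have h1 : Real.log (6*c - 3) = -(2*c) := by
      rw [h63, Real.log_inv, Real.log_exp]
    have h2 : Real.log (6*c - 3) = Real.log 3 + Real.log (2*c - 1) := by
      rw [show (6*c - 3 : ℝ) = 3 * (2*c - 1) by ring,
        Real.log_mul (by norm_num) (by positivity)]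
    linarith
  have hGpos : 0 < G := by
    have hneg : Real.log ((16/27) * (2*c - 1)) < 0 :=
      Real.log_neg (by nlinarith) (by nlinarith)
    rw [hGdef]
    exact div_pos_of_neg_of_neg (by norm_num) hneg
  -- measurability and integrability
  have hmeas : Measurable ρ := by
    apply Measurable.ite (measurableSet_le measurable_id measurable_const) measurable_const
    apply Measurable.ite (measurableSet_le measurable_id measurable_const)
    · exact measurable_const.div ((measurable_id.const_mul 2).sub measurable_const)
    · exact measurable_const.div measurable_id
  have hρint : ∀ a b : ℝ, IntervalIntegrable ρ volume a b := by
    intro a b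
    rw [intervalIntegrable_iff]
    apply Measure.integrableOn_of_bounded (M := |G|/(2*c - 1) + 3*|G|)
    · exact (measure_Ioc_lt_top).ne
    · exact hmeas.aestronglyMeasurable
    · have hC0 : 0 ≤ |G|/(2*c - 1) := div_nonneg (abs_nonneg _) hc0.le
      filter_upwards with x
      rw [hρ]
      simp only []
      split_ifs with h1 h2
      · rw [norm_zero]
        have := abs_nonneg G
        linarith
      · push_neg at h1
        rw [Real.norm_eq_abs, abs_div, abs_of_pos (show (0:ℝ) < 2*x - 1 by linarith)]
        have hle : |G|/(2*x - 1) ≤ |G|/(2*c - 1) := by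
          gcongr <;> linarith [abs_nonneg G]
        have := abs_nonneg G
        linarith
      · push_neg at h1 h2
        have hx0 : (0:ℝ) < x := by linarith
        rw [Real.norm_eq_abs, abs_div, abs_of_pos hx0, div_le_iff₀ hx0]
        have h2G : |2*G| = 2*|G| := by rw [abs_mul]; norm_num
        nlinarith [abs_nonneg G]
  have hmax : Continuous (fun x : ℝ => max (x/2) (1 - x)) :=
    Continuous.max (continuous_id.div_const 2) (continuous_const.sub continuous_id)
  have hint1 : ∀ a b : ℝ, IntervalIntegrable (fun x => x * ρ x) volume a b :=
    fun a b => (hρint a b).continuousOn_mul continuous_id.continuousOn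
  have hint2 : ∀ a b : ℝ, IntervalIntegrable (fun x => max (x/2) (1 - x) * ρ x) volume a b :=
    fun a b => (hρint a b).continuousOn_mul hmax.continuousOn
  -- special log values
  have hlog13 : Real.log (2*(2/3:ℝ) - 1) = -Real.log 3 := by
    rw [show (2*(2/3:ℝ) - 1) = 3⁻¹ by norm_num, Real.log_inv]
  -- reusable piece values
  have hpiece_xmid : ∀ b, c ≤ b → b ≤ 2/3 →
      ∫ x in c..b, x * ρ x = G*(b - c)/2
        + G/2 * (1/2 * Real.log (2*b - 1) - 1/2 * Real.log (2*c - 1)) := by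
    intro b hb1 hb2
    rw [piece_eq (g := fun x => x * (G/(2*x - 1))) hb1 ?_, int_x_div G c b hc1 hb1]
    intro x hx1 hx2
    rw [hρ]
    simp only []
    rw [if_neg (by linarith), if_pos (by linarith)]
  have hpiece_mmid : ∀ a, c ≤ a → a ≤ 2/3 → (1/2 < a) →
      ∫ x in a..(2/3), max (x/2) (1 - x) * ρ x = -(G*(2/3 - a)/2)
        + G/2 * (1/2 * Real.log (2*(2/3:ℝ) - 1) - 1/2 * Real.log (2*a - 1)) := by
    intro a ha1 ha2 ha3
    rw [piece_eq (g := fun x => (1 - x) * (G/(2*x - 1))) ha2 ?_,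
      int_one_sub_div G a (2/3) ha3 ha2]
    intro x hx1 hx2
    rw [hρ]
    simp only []
    rw [if_neg (by linarith), if_pos (by linarith), max_eq_right (by linarith)]
  have hpiece_mhigh : ∀ a, 2/3 ≤ a → a ≤ 1 →
      ∫ x in a..1, max (x/2) (1 - x) * ρ x = G * (1 - a) := by
    intro a ha1 ha2
    rw [piece_eq (g := fun _ => G) ha2 ?_, intervalIntegral.integral_const, smul_eq_mul]
    · ring
    intro x hx1 hx2
    have hx0 : (0:ℝ) < x := by linarith
    rw [hρ]
    simp only []
    rw [if_neg (by push_neg; linarith), if_neg (by push_neg; linarith),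
      max_eq_left (by linarith)]
    field_simp
  have hpiece_zero1 : ∀ b, 1/2 ≤ b → b ≤ c → ∫ x in (1/2:ℝ)..b, x * ρ x = 0 := by
    intro b hb1 hb2
    rw [piece_eq (g := fun _ => 0) hb1 ?_, intervalIntegral.integral_zero]
    intro x hx1 hx2
    rw [hρ]
    simp only []
    rw [if_pos (by linarith), mul_zero]
  -- main case analysis
  rcases le_or_gt y c with hyc | hyc
  · -- y ≤ c
    have e1 : ∫ x in (1/2:ℝ)..y, x * ρ x = 0 := hpiece_zero1 y hy1 hyc
    have esplit : (∫ x in y..c, max (x/2) (1 - x) * ρ x)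
        + ((∫ x in c..(2/3:ℝ), max (x/2) (1 - x) * ρ x)
          + ∫ x in (2/3:ℝ)..1, max (x/2) (1 - x) * ρ x)
        = ∫ x in y..1, max (x/2) (1 - x) * ρ x := by
      rw [intervalIntegral.integral_add_adjacent_intervals (hint2 c (2/3)) (hint2 (2/3) 1),
        intervalIntegral.integral_add_adjacent_intervals (hint2 y c) (hint2 c 1)]
    have e2 : ∫ x in y..c, max (x/2) (1 - x) * ρ x = 0 := by
      rw [piece_eq (g := fun _ => 0) hyc ?_, intervalIntegral.integral_zero]
      intro x hx1 hx2
      rw [hρ]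
      simp only []
      rw [if_pos (by linarith), mul_zero]
    have e3 := hpiece_mmid c le_rfl hc2.le hc1
    have e4 := hpiece_mhigh (2/3) le_rfl (by norm_num)
    rw [e1, ← esplit, e2, e3, e4, hlog13, hlog2c]
    have hyG : G * y ≤ G * c := by
      apply mul_le_mul_of_nonneg_left hyc hGpos.le
    rw [ge_iff_le]
    nlinarith [hGpos]
  · rcases le_or_gt y (2/3) with hy23 | hy23
    · -- c < y ≤ 2/3
      have esplit1 : (∫ x in (1/2:ℝ)..c, x * ρ x) + (∫ x in c..y, x * ρ x)
          = ∫ x in (1/2:ℝ)..y, x * ρ x :=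
        intervalIntegral.integral_add_adjacent_intervals (hint1 (1/2) c) (hint1 c y)
      have e1 := hpiece_zero1 c (by linarith) le_rfl
      have e2 := hpiece_xmid y hyc.le hy23
      have esplit2 : (∫ x in y..(2/3:ℝ), max (x/2) (1 - x) * ρ x)
          + (∫ x in (2/3:ℝ)..1, max (x/2) (1 - x) * ρ x)
          = ∫ x in y..1, max (x/2) (1 - x) * ρ x :=
        intervalIntegral.integral_add_adjacent_intervals (hint2 y (2/3)) (hint2 (2/3) 1)
      have e3 := hpiece_mmid y (by linarith) hy23 (by linarith)
      have e4 := hpiece_mhigh (2/3) le_rfl (by norm_num)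
      rw [← esplit1, e1, e2, ← esplit2, e3, e4, hlog13, hlog2c]
      rw [ge_iff_le]
      nlinarith [hGpos]
    · -- 2/3 < y
      have esplit1 : ((∫ x in (1/2:ℝ)..c, x * ρ x) + (∫ x in c..(2/3:ℝ), x * ρ x))
          + (∫ x in (2/3:ℝ)..y, x * ρ x) = ∫ x in (1/2:ℝ)..y, x * ρ x := by
        rw [intervalIntegral.integral_add_adjacent_intervals (hint1 (1/2) c) (hint1 c (2/3)),
          intervalIntegral.integral_add_adjacent_intervals (hint1 (1/2) (2/3)) (hint1 (2/3) y)]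
      have e1 := hpiece_zero1 c (by linarith) le_rfl
      have e2 := hpiece_xmid (2/3) hc2.le le_rfl
      have e3 : ∫ x in (2/3:ℝ)..y, x * ρ x = 2*G*(y - 2/3) := by
        rw [piece_eq (g := fun _ => 2*G) hy23.le ?_, intervalIntegral.integral_const,
          smul_eq_mul]
        · ring
        intro x hx1 hx2
        have hx0 : x ≠ 0 := by intro h; rw [h] at hx1; norm_num at hx1
        rw [hρ]
        simp only []
        rw [if_neg (by push_neg; linarith), if_neg (by push_neg; linarith)]
        field_simp
      have e4 := hpiece_mhigh y hy23.le hy2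
      rw [← esplit1, e1, e2, e3, e4, hlog13, hlog2c]
      rw [ge_iff_le]
      nlinarith [hGpos]
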